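/- Assume π₀ is f-invariant. Suppose that for every ε > 0 there exist T = T(ε) ∈ ℕ and a zero-delay coding and estimation policy over the finite alphabet M such that π₀({x₀ ∈ X : d(f^t(x₀), x̂_t(x₀)) ≤ ε for all t ≥ T}) = 1. Then log|M| ≥ h_top(f; supp π₀) (in particular the topological entropy of f on the support of π₀ is finite). -/

import Mathlib

open MeasureTheory Filter Set

/-- A zero-delay coding and estimation policy over a channel alphabet `M`:
measurable coder maps `δ_t : X^{t+1} → M` and measurable estimator maps `γ_t : M^{t+1} → X`. -/
structure Policy (X : Type*) [MeasurableSpace X] (M : Type*) [MeasurableSpace M] where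
  coder : (t : ℕ) → (Fin (t + 1) → X) → M
  coder_meas : ∀ t, Measurable (coder t)
  est : (t : ℕ) → (Fin (t + 1) → M) → X
  est_meas : ∀ t, Measurable (est t)

/-- The channel symbol `q_t = δ_t(x₀, f(x₀), …, f^t(x₀))`. -/
def Policy.symb {X M : Type*} [MeasurableSpace X] [MeasurableSpace M]
    (pol : Policy X M) (f : X → X) (t : ℕ) (x₀ : X) : M :=
  pol.coder t fun i => f^[(i : ℕ)] x₀

/-- The estimator output `x̂_t(x₀) = γ_t(q₀, …, q_t)`. -/
def Policy.out {X M : Type*} [MeasurableSpace X] [MeasurableSpace M]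
    (pol : Policy X M) (f : X → X) (t : ℕ) (x₀ : X) : X :=
  pol.est t fun i => pol.symb f (i : ℕ) x₀
/-- The (topological) support of a Borel measure: points all of whose neighborhoods
have positive measure. -/
def msupp {X : Type*} [TopologicalSpace X] [MeasurableSpace X] (μ : Measure X) : Set X :=
  {x | ∀ U ∈ nhds x, 0 < μ U}
/-- `r_sep(n,ε;A)`: the maximal cardinality of an `(n,ε)`-separated subset of `A`. -/
noncomputable def rsep {X : Type*} [MetricSpace X] (f : X → X) (n : ℕ) (ε : ℝ) (A : Set X) : ℕ :=
  sSup {k | ∃ E : Finset X, ↑E ⊆ A ∧ E.card = k ∧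
    ∀ x ∈ E, ∀ y ∈ E, x ≠ y → ∃ i < n, ε < dist (f^[i] x) (f^[i] y)}

/-- `h(f;A,ε) = limsup_{n→∞} (1/n) log₂ r_sep(n,ε;A)`. -/
noncomputable def hSep {X : Type*} [MetricSpace X] (f : X → X) (A : Set X) (ε : ℝ) : EReal :=
  limsup (fun n : ℕ => ((Real.logb 2 (rsep f n ε A) / n : ℝ) : EReal)) atTop

/-- Topological entropy of `f` on `K` via separated sets. -/
noncomputable def htopSep {X : Type*} [MetricSpace X] (f : X → X) (K : Set X) : EReal :=
  ⨆ (ε : ℝ) (_ : 0 < ε), hSep f K ε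

/-- Finite covers by small balls in a compact metric space. -/
lemma aux_cover {Y : Type*} [MetricSpace Y] [CompactSpace Y] {r : ℝ} (hr : 0 < r) :
    ∃ s : Finset Y, ∀ y : Y, ∃ z ∈ s, dist y z < r := by
  obtain ⟨t, -, htfin, hcover⟩ :=
    finite_cover_balls_of_compact (isCompact_univ : IsCompact (Set.univ : Set Y)) hr
  refine ⟨htfin.toFinset, fun y => ?_⟩
  have h := hcover (mem_univ y)
  simp only [Set.mem_iUnion] at h
  obtain ⟨z, hz, hyz⟩ := h
  exact ⟨z, htfin.mem_toFinset.mpr hz, by simpa [dist_comm] using hyz⟩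

/-- The estimator output is measurable. -/
lemma aux_out_meas {X M : Type*} [MeasurableSpace X] [MeasurableSpace M]
    (pol : Policy X M) (f : X → X) (hf : Measurable f) (t : ℕ) :
    Measurable (pol.out f t) := by
  apply (pol.est_meas t).comp
  apply measurable_pi_lambda
  intro i
  exact (pol.coder_meas (i : ℕ)).comp (measurable_pi_lambda _ fun j => hf.iterate (j : ℕ))

/-- If `π₀` is `f`-invariant and for every `ε > 0` the eventual almost
sure estimation objective (E1) can be achieved over the finite alphabet `M` by some
zero-delay coding and estimation policy, then `log₂|M| ≥ h_top(f; supp π₀)`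
(in particular the topological entropy of `f` on the support of `π₀` is finite). -/
theorem stmt0 {X : Type*} [MetricSpace X] [CompactSpace X] [MeasurableSpace X] [BorelSpace X]
    (f : X ≃ₜ X) (π₀ : Measure X) [IsProbabilityMeasure π₀]
    (hinv : MeasurePreserving (⇑f) π₀ π₀)
    (M : Type*) [Fintype M] [MeasurableSpace M]
    (hach : ∀ ε : ℝ, 0 < ε → ∃ T : ℕ, ∃ pol : Policy X M,
      π₀ {x₀ | ∀ t, T ≤ t → dist ((⇑f)^[t] x₀) (pol.out (⇑f) t x₀) ≤ ε} = 1) :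
    htopSep (⇑f) (msupp π₀) ≤ ((Real.logb 2 (Fintype.card M) : ℝ) : EReal) := by
  classical
  have hXne : Nonempty X := by
    by_contra h
    rw [not_nonempty_iff] at h
    have h1 : π₀ Set.univ = 1 := measure_univ
    rw [Set.univ_eq_empty_iff.mpr h, measure_empty] at h1
    exact zero_ne_one h1
  set L := Real.logb 2 (Fintype.card M) with hLdef
  refine iSup₂_le fun ε0 hε0 => ?_
  obtain ⟨T, pol, hG⟩ := hach (ε0 / 4) (by linarith)
  have hMne : Nonempty M := ⟨pol.coder 0 (fun _ => Classical.arbitrary X)⟩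
  have hM1 : 1 ≤ Fintype.card M := Fintype.card_pos
  set G := {x₀ | ∀ t, T ≤ t → dist ((⇑f)^[t] x₀) (pol.out (⇑f) t x₀) ≤ ε0 / 4} with hGdef
  have hGmeas : MeasurableSet G := by
    have : G = ⋂ t : ℕ, {x | T ≤ t → dist ((⇑f)^[t] x) (pol.out (⇑f) t x) ≤ ε0 / 4} := by
      ext x; simp [hGdef, Set.mem_iInter]
    rw [this]
    refine MeasurableSet.iInter fun t => ?_
    by_cases ht : T ≤ t
    · simp only [ht, forall_true_left]
      exact measurableSet_le
        ((f.continuous.measurable.iterate t).dist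
          (aux_out_meas pol (⇑f) f.continuous.measurable t)) measurable_const
    · simp [ht]
  have hGc : π₀ Gᶜ = 0 := by
    rw [prob_compl_eq_zero_iff hGmeas]; exact hG
  -- finite cover of the product space by small balls
  obtain ⟨s, hs⟩ := aux_cover (Y := Fin T → X) (r := ε0 / 4) (by linarith)
  set C := s.card with hCdef
  have hC1 : 1 ≤ C := by
    obtain ⟨z, hz, -⟩ := hs (Classical.arbitrary _)
    exact Finset.card_pos.mpr ⟨z, hz⟩
  choose c hcs hcd using hs
  -- counting bound
  have hcount : ∀ n : ℕ, rsep (⇑f) n ε0 (msupp π₀) ≤ Fintype.card M ^ n * C := by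
    intro n
    have h0 : (0 : ℕ) ∈ {k | ∃ E : Finset X, ↑E ⊆ msupp π₀ ∧ E.card = k ∧
        ∀ x ∈ E, ∀ y ∈ E, x ≠ y → ∃ i < n, ε0 < dist ((⇑f)^[i] x) ((⇑f)^[i] y)} :=
      ⟨∅, by simp⟩
    rw [rsep]
    apply csSup_le ⟨0, h0⟩
    rintro k ⟨E, hEA, rfl, hEsep⟩
    -- choose for each x ∈ E a nearby good point
    have hg : ∀ x ∈ E, ∃ y, y ∈ G ∧ ∀ i < n, dist ((⇑f)^[i] x) ((⇑f)^[i] y) < ε0 / 4 := by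
      intro x hx
      set V := ⋂ i ∈ Finset.range n, ((⇑f)^[i]) ⁻¹' Metric.ball ((⇑f)^[i] x) (ε0 / 4) with hVdef
      have hVopen : IsOpen V :=
        isOpen_biInter_finset fun i _ =>
          (f.continuous.iterate i).isOpen_preimage _ Metric.isOpen_ball
      have hxV : x ∈ V := by
        simp only [hVdef, Set.mem_iInter, Set.mem_preimage, Metric.mem_ball]
        intro i _
        simpa using by linarith
      have hVpos : 0 < π₀ V := hEA hx V (hVopen.mem_nhds hxV)
      have : (V ∩ G).Nonempty := by
        by_contra hne
        rw [Set.not_nonempty_iff_eq_empty] at hne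
        have hsub : V ⊆ Gᶜ := by
          intro y hy
          intro hyG
          exact Set.eq_empty_iff_forall_notMem.mp hne y ⟨hy, hyG⟩
        exact absurd (le_antisymm (le_trans (measure_mono hsub) hGc.le) (zero_le))
          (ne_of_gt hVpos)
      obtain ⟨y, hyV, hyG⟩ := this
      refine ⟨y, hyG, fun i hi => ?_⟩
      have := Set.mem_iInter.mp hyV i
      have := Set.mem_iInter.mp this (Finset.mem_range.mpr hi)
      rw [Set.mem_preimage, Metric.mem_ball] at this
      simpa [dist_comm] using this
    choose! g hg1 hg2 using hg
    -- the injection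
    set Φ : X → (Fin n → M) × (Fin T → X) :=
      fun x => (fun i => pol.symb (⇑f) (i : ℕ) (g x), c (fun j => (⇑f)^[(j : ℕ)] (g x)))
      with hΦdef
    have hmaps : ∀ x ∈ E, Φ x ∈ (Finset.univ : Finset (Fin n → M)) ×ˢ s := by
      intro x _
      rw [Finset.mem_product]
      exact ⟨Finset.mem_univ _, hcs _⟩
    have hinj : Set.InjOn Φ E := by
      intro x hx y hy hΦeq
      by_contra hxy
      obtain ⟨i, hin, hisep⟩ := hEsep x hx y hy hxy
      have hdx := hg2 x hx i hin
      have hdy := hg2 y hy i hin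
      have hsep' : ε0 / 2 < dist ((⇑f)^[i] (g x)) ((⇑f)^[i] (g y)) := by
        have h4 := dist_triangle4 ((⇑f)^[i] x) ((⇑f)^[i] (g x)) ((⇑f)^[i] (g y)) ((⇑f)^[i] y)
        have hc1 : dist ((⇑f)^[i] (g y)) ((⇑f)^[i] y) = dist ((⇑f)^[i] y) ((⇑f)^[i] (g y)) :=
          dist_comm _ _
        linarith
      have hq : (fun i : Fin n => pol.symb (⇑f) (i : ℕ) (g x))
          = fun i : Fin n => pol.symb (⇑f) (i : ℕ) (g y) := congrArg Prod.fst hΦeq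
      have hcc : c (fun j : Fin T => (⇑f)^[(j : ℕ)] (g x))
          = c (fun j : Fin T => (⇑f)^[(j : ℕ)] (g y)) := congrArg Prod.snd hΦeq
      by_cases hiT : i < T
      · -- separation happens before time T: contradicts the common ball center
        have h1 : dist ((⇑f)^[i] (g x)) ((⇑f)^[i] (g y))
            ≤ dist (fun j : Fin T => (⇑f)^[(j : ℕ)] (g x))
                (fun j : Fin T => (⇑f)^[(j : ℕ)] (g y)) :=
          dist_le_pi_dist (fun j : Fin T => (⇑f)^[(j : ℕ)] (g x))
            (fun j : Fin T => (⇑f)^[(j : ℕ)] (g y)) (⟨i, hiT⟩ : Fin T)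
        have h2 := hcd (fun j : Fin T => (⇑f)^[(j : ℕ)] (g x))
        have h3 := hcd (fun j : Fin T => (⇑f)^[(j : ℕ)] (g y))
        rw [← hcc] at h3
        have h4 := dist_triangle_right (fun j : Fin T => (⇑f)^[(j : ℕ)] (g x))
          (fun j : Fin T => (⇑f)^[(j : ℕ)] (g y)) (c (fun j : Fin T => (⇑f)^[(j : ℕ)] (g x)))
        linarith
      · -- separation happens at time ≥ T: contradicts coinciding estimates
        push_neg at hiT
        have houteq : pol.out (⇑f) i (g x) = pol.out (⇑f) i (g y) := by
          unfold Policy.out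
          congr 1
          funext j
          have hjn : (j : ℕ) < n := lt_of_le_of_lt (Nat.lt_succ_iff.mp j.isLt) hin
          exact congrFun hq ⟨(j : ℕ), hjn⟩
        have hex := hg1 x hx i hiT
        have hey := hg1 y hy i hiT
        rw [houteq] at hex
        have h4 := dist_triangle_right ((⇑f)^[i] (g x)) ((⇑f)^[i] (g y))
          (pol.out (⇑f) i (g y))
        linarith
    have hcard := Finset.card_le_card_of_injOn Φ hmaps hinj
    rw [Finset.card_product, Finset.card_univ, Fintype.card_fun, Fintype.card_fin] at hcard
    exact hcard
  -- from the counting bound to the limsup bound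
  have hL0 : 0 ≤ L := Real.logb_nonneg one_lt_two (by exact_mod_cast hM1)
  have hlogC : 0 ≤ Real.logb 2 (C : ℝ) := Real.logb_nonneg one_lt_two (by exact_mod_cast hC1)
  have key : ∀ n : ℕ, 1 ≤ n →
      Real.logb 2 (rsep (⇑f) n ε0 (msupp π₀)) / n ≤ Real.logb 2 (C : ℝ) / n + L := by
    intro n hn
    have hnpos : (0 : ℝ) < n := by exact_mod_cast hn
    have hb : Real.logb 2 (rsep (⇑f) n ε0 (msupp π₀)) ≤ Real.logb 2 (C : ℝ) + n * L := by
      rcases Nat.eq_zero_or_pos (rsep (⇑f) n ε0 (msupp π₀)) with h0 | hpos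
      · rw [h0]
        simp only [Nat.cast_zero, Real.logb_zero]
        have : 0 ≤ (n : ℝ) * L := mul_nonneg hnpos.le hL0
        linarith
      · have hle : ((rsep (⇑f) n ε0 (msupp π₀) : ℕ) : ℝ)
            ≤ ((Fintype.card M : ℝ) ^ n * (C : ℝ)) := by
          have := hcount n
          exact_mod_cast this
        have hpos' : (0 : ℝ) < ((rsep (⇑f) n ε0 (msupp π₀) : ℕ) : ℝ) := by exact_mod_cast hpos
        have h1 : Real.logb 2 ((rsep (⇑f) n ε0 (msupp π₀) : ℕ) : ℝ)
            ≤ Real.logb 2 ((Fintype.card M : ℝ) ^ n * (C : ℝ)) :=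
          Real.logb_le_logb_of_le (by norm_num) hpos' hle
        have hMpos : (0 : ℝ) < (Fintype.card M : ℝ) := by exact_mod_cast hM1
        have hCpos : (0 : ℝ) < (C : ℝ) := by exact_mod_cast hC1
        rw [Real.logb_mul (by positivity) (by positivity), Real.logb_pow] at h1
        rw [hLdef]
        linarith
    have h2 : Real.logb 2 (rsep (⇑f) n ε0 (msupp π₀)) / n
        ≤ (Real.logb 2 (C : ℝ) + n * L) / n := (div_le_div_iff_of_pos_right hnpos).mpr hb
    rwa [add_div, mul_div_cancel_left₀ _ (ne_of_gt hnpos)] at h2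
  have hv : Tendsto (fun n : ℕ => ((Real.logb 2 (C : ℝ) / n + L : ℝ) : EReal))
      atTop (nhds (L : EReal)) := by
    rw [EReal.tendsto_coe]
    have h0 : Tendsto (fun n : ℕ => Real.logb 2 (C : ℝ) / n + L) atTop (nhds (0 + L)) :=
      (tendsto_const_div_atTop_nhds_zero_nat _).add tendsto_const_nhds
    rwa [zero_add] at h0
  have hle : hSep (⇑f) (msupp π₀) ε0
      ≤ limsup (fun n : ℕ => ((Real.logb 2 (C : ℝ) / n + L : ℝ) : EReal)) atTop := by
    refine limsup_le_limsup ?_ (by isBoundedDefault) (by isBoundedDefault)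
    filter_upwards [eventually_ge_atTop 1] with n hn
    exact EReal.coe_le_coe_iff.mpr (key n hn)
  rw [hv.limsup_eq] at hle
  exact hle
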